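/- Fix α > 0 and a dimension d ≥ 1. Let Φ : ℝᵈ × ℝ → ℝ and Φ̄ : ℝ → ℝ be continuous, and let v : ℝᵈ × ℝ → ℝᵈ be continuously differentiable and satisfy ∂ₜ v(x,t) + (v(x,t) · ∇ₓ) v(x,t) = (1/α)(Φ(x,t) − Φ̄(t)) v(x,t) for all (x,t). Let z : ℝ → ℝᵈ be differentiable with z′(t) = v(z(t), t) for all t and z(0) = x₀. Then for all t ≥ 0, z(t) = x₀ + (∫₀ᵗ exp((1/α) ∫₀ˢ (Φ(z(r), r) − Φ̄(r)) dr) ds) · v(x₀, 0); in particular, the trajectory {z(t) : t ≥ 0} is contained in the ray {x₀ + λ · v(x₀, 0) : λ ≥ 0}, so the particle moves in a straight line. -/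

import Mathlib

/-- The "particles move in straight lines" consequence of part (ii) of the
theorem in Section 3.3: along the characteristics, the trajectory is the ray
emanating from `x₀` in the direction of the initial velocity `v(x₀, 0)`. -/
theorem particles_move_in_straight_lines
    (α : ℝ) (hα : 0 < α) (d : ℕ) (hd : 1 ≤ d)
    (Φ : EuclideanSpace ℝ (Fin d) × ℝ → ℝ) (hΦ : Continuous Φ)
    (Φbar : ℝ → ℝ) (hΦbar : Continuous Φbar)
    (v : EuclideanSpace ℝ (Fin d) × ℝ → EuclideanSpace ℝ (Fin d))
    (hv : ContDiff ℝ 1 v)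
    (hpde : ∀ p : EuclideanSpace ℝ (Fin d) × ℝ,
      fderiv ℝ v p (v p, 1) = ((1 / α) * (Φ p - Φbar p.2)) • v p)
    (z : ℝ → EuclideanSpace ℝ (Fin d)) (x₀ : EuclideanSpace ℝ (Fin d))
    (hz : ∀ t, HasDerivAt z (v (z t, t)) t) (hz0 : z 0 = x₀) :
    (∀ t ≥ (0 : ℝ), z t = x₀ +
        (∫ s in (0 : ℝ)..t,
          Real.exp ((1 / α) * ∫ r in (0 : ℝ)..s, (Φ (z r, r) - Φbar r)))
          • v (x₀, 0)) ∧
      ∀ t ≥ (0 : ℝ), ∃ l : ℝ, 0 ≤ l ∧ z t = x₀ + l • v (x₀, 0) := by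
  have hzc : Continuous z := Differentiable.continuous (fun t => (hz t).differentiableAt)
  set c : ℝ → ℝ := fun t => (1 / α) * (Φ (z t, t) - Φbar t) with hc_def
  have hcc : Continuous c :=
    continuous_const.mul ((hΦ.comp (hzc.prodMk continuous_id)).sub hΦbar)
  set w : ℝ → EuclideanSpace ℝ (Fin d) := fun t => v (z t, t) with hw_def
  have hwc : Continuous w := hv.continuous.comp (hzc.prodMk continuous_id)
  have hw' : ∀ t, HasDerivAt w (c t • w t) t := by
    intro t
    have h1 : HasDerivAt (fun t => ((z t, t) : EuclideanSpace ℝ (Fin d) × ℝ))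
        (w t, 1) t := (hz t).prodMk (hasDerivAt_id t)
    have h2 : HasFDerivAt v (fderiv ℝ v (z t, t)) (z t, t) :=
      (hv.differentiable one_ne_zero (z t, t)).hasFDerivAt
    have h3 : HasDerivAt (fun t => v (z t, t)) (fderiv ℝ v (z t, t) (w t, 1)) t :=
      HasFDerivAt.comp_hasDerivAt (f := fun s => ((z s, s) : EuclideanSpace ℝ (Fin d) × ℝ)) t h2 h1
    have h4 : fderiv ℝ v (z t, t) (w t, 1) = c t • w t := hpde (z t, t)
    rw [h4] at h3
    exact h3
  set g : ℝ → ℝ := fun t => ∫ r in (0:ℝ)..t, c r with hg_def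
  have hg' : ∀ t, HasDerivAt g (c t) t := fun t =>
    intervalIntegral.integral_hasDerivAt_right (hcc.intervalIntegrable 0 t)
      (hcc.stronglyMeasurableAtFilter _ _) hcc.continuousAt
  set u : ℝ → EuclideanSpace ℝ (Fin d) := fun t => Real.exp (-(g t)) • w t with hu_def
  have hu' : ∀ t, HasDerivAt u 0 t := by
    intro t
    have h1 : HasDerivAt (fun t => Real.exp (-(g t)))
        (Real.exp (-(g t)) * -(c t)) t := ((hg' t).neg).exp
    have h2 := h1.smul (hw' t)
    have h0 : Real.exp (-(g t)) • (c t • w t) + (Real.exp (-(g t)) * -(c t)) • w t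
        = (0 : EuclideanSpace ℝ (Fin d)) := by
      rw [smul_smul, ← add_smul]
      have : Real.exp (-(g t)) * c t + Real.exp (-(g t)) * -(c t) = 0 := by ring
      rw [this, zero_smul]
    rw [h0] at h2
    exact h2
  have hconst : ∀ t, u t = u 0 := fun t =>
    is_const_of_deriv_eq_zero (fun s => (hu' s).differentiableAt)
      (fun s => (hu' s).deriv) t 0
  have hg0 : g 0 = 0 := intervalIntegral.integral_same
  have hu0 : u 0 = v (x₀, 0) := by
    simp [hu_def, hg0, hw_def, hz0]
  have hwEq : ∀ t, w t = Real.exp (g t) • v (x₀, 0) := by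
    intro t
    have := hconst t
    rw [hu0] at this
    have h := congrArg (fun y => Real.exp (g t) • y) this
    simpa [hu_def, smul_smul, ← Real.exp_add] using h
  have key : ∀ t, z t = x₀ + (∫ s in (0:ℝ)..t, Real.exp (g s)) • v (x₀, 0) := by
    intro t
    have hint : ∫ s in (0:ℝ)..t, w s = z t - z 0 :=
      intervalIntegral.integral_eq_sub_of_hasDerivAt (fun s _ => hz s)
        (hwc.intervalIntegrable 0 t)
    have h1 : ∫ s in (0:ℝ)..t, w s
        = (∫ s in (0:ℝ)..t, Real.exp (g s)) • v (x₀, 0) := by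
      rw [intervalIntegral.integral_congr (fun s _ => hwEq s)]
      exact intervalIntegral.integral_smul_const _ _
    rw [h1, hz0] at hint
    rw [hint]
    abel
  have hgEq : ∀ s, g s = (1 / α) * ∫ r in (0:ℝ)..s, (Φ (z r, r) - Φbar r) := by
    intro s
    rw [hg_def]
    simp only [hc_def]
    rw [intervalIntegral.integral_const_mul]
  constructor
  · intro t _
    have := key t
    simp only [hgEq] at this
    exact this
  · intro t ht
    refine ⟨∫ s in (0:ℝ)..t, Real.exp (g s), ?_, key t⟩
    exact intervalIntegral.integral_nonneg ht (fun s _ => (Real.exp_pos _).le)
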